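/- (Hurwitz property of the modal matrix A.) Let C, K ∈ ℝ^{n×n} be symmetric positive definite matrices, and let A ∈ ℝ^{2n×2n} be the block matrix A = [[0, I_n], [−K, −C]]. Then A is Hurwitz: every eigenvalue of A, viewed as a matrix over ℂ, has negative real part. -/

import Mathlib

open Matrix Filter Topology Set
open scoped ComplexOrder

/-- A real square matrix is Hurwitz if every eigenvalue of it, viewed as a matrix over `ℂ`
(equivalently, every complex root of its characteristic polynomial), has negative real part. -/
def IsHurwitz {m : Type*} [Fintype m] [DecidableEq m] (M : Matrix m m ℝ) : Prop :=
  ∀ z : ℂ, ((M.map Complex.ofReal).charpoly).IsRoot z → z.re < 0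

section aux

variable {n : ℕ}

/-- For a real symmetric positive definite matrix `M` and a nonzero complex vector `x`,
the quadratic form `star x ⬝ᵥ (M x)` is a positive real number. -/
lemma pd_quad_form (M : Matrix (Fin n) (Fin n) ℝ) (hs : M.IsSymm) (hpd : M.PosDef)
    (x : Fin n → ℂ) (hx : x ≠ 0) :
    ∃ r : ℝ, 0 < r ∧ star x ⬝ᵥ ((M.map Complex.ofReal) *ᵥ x) = (r : ℂ) := by
  set a : Fin n → ℝ := fun i => (x i).re with ha
  set b : Fin n → ℝ := fun i => (x i).im with hb
  have hre : (star x ⬝ᵥ ((M.map Complex.ofReal) *ᵥ x)).re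
      = a ⬝ᵥ (M *ᵥ a) + b ⬝ᵥ (M *ᵥ b) := by
    simp only [dotProduct, mulVec, Pi.star_apply, Complex.re_sum]
    rw [← Finset.sum_add_distrib]
    apply Finset.sum_congr rfl
    intro i _
    simp only [Complex.mul_re, Complex.re_sum, Complex.im_sum, Finset.mul_sum,
      ← Finset.sum_add_distrib, Finset.sum_mul, ← Finset.sum_sub_distrib]
    apply Finset.sum_congr rfl
    intro j _
    simp only [map_apply, Complex.mul_re, Complex.mul_im, Complex.ofReal_re, Complex.ofReal_im,
      Pi.star_apply, RCLike.star_def, Complex.conj_re, Complex.conj_im, ha, hb]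
    ring
  have him : (star x ⬝ᵥ ((M.map Complex.ofReal) *ᵥ x)).im
      = a ⬝ᵥ (M *ᵥ b) - b ⬝ᵥ (M *ᵥ a) := by
    simp only [dotProduct, mulVec, Pi.star_apply, Complex.im_sum]
    rw [← Finset.sum_sub_distrib]
    apply Finset.sum_congr rfl
    intro i _
    simp only [Complex.mul_im, Complex.mul_re, Complex.re_sum, Complex.im_sum, Finset.mul_sum,
      ← Finset.sum_sub_distrib, Finset.sum_mul, ← Finset.sum_add_distrib]
    apply Finset.sum_congr rfl
    intro j _
    simp only [map_apply, Complex.mul_re, Complex.mul_im, Complex.ofReal_re, Complex.ofReal_im,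
      Pi.star_apply, RCLike.star_def, Complex.conj_re, Complex.conj_im, ha, hb]
    ring
  have hsym : a ⬝ᵥ (M *ᵥ b) = b ⬝ᵥ (M *ᵥ a) := by
    rw [dotProduct_mulVec a M b, dotProduct_comm, ← mulVec_transpose, hs.eq]
  have hab : a ≠ 0 ∨ b ≠ 0 := by
    by_contra h
    push_neg at h
    apply hx
    funext i
    have h1 : a i = 0 := by rw [h.1]; rfl
    have h2 : b i = 0 := by rw [h.2]; rfl
    exact Complex.ext h1 h2
  have hpos : 0 < a ⬝ᵥ (M *ᵥ a) + b ⬝ᵥ (M *ᵥ b) := by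
    have hA : (0:ℝ) ≤ a ⬝ᵥ (M *ᵥ a) := by simpa using hpd.posSemidef.dotProduct_mulVec_nonneg a
    have hB : (0:ℝ) ≤ b ⬝ᵥ (M *ᵥ b) := by simpa using hpd.posSemidef.dotProduct_mulVec_nonneg b
    rcases hab with h | h
    · have := hpd.dotProduct_mulVec_pos h
      simp only [star_trivial] at this
      linarith
    · have := hpd.dotProduct_mulVec_pos h
      simp only [star_trivial] at this
      linarith
  refine ⟨a ⬝ᵥ (M *ᵥ a) + b ⬝ᵥ (M *ᵥ b), hpos, ?_⟩
  apply Complex.ext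
  · simpa using hre
  · simp [him, hsym]

lemma quad_root_re_neg {s c k : ℝ} (hs : 0 < s) (hc : 0 < c) (hk : 0 < k) {z : ℂ}
    (h : (s : ℂ) * z ^ 2 + (c : ℂ) * z + (k : ℂ) = 0) : z.re < 0 := by
  have hre := congrArg Complex.re h
  have him := congrArg Complex.im h
  simp only [Complex.add_re, Complex.add_im, Complex.mul_re, Complex.mul_im, Complex.ofReal_re,
    Complex.ofReal_im, Complex.zero_re, Complex.zero_im, pow_two] at hre him
  by_contra hp
  push_neg at hp
  have him' : z.im * (2 * z.re * s + c) = 0 := by nlinarith [him]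
  have hzim : z.im = 0 := by
    rcases mul_eq_zero.mp him' with h0 | h0
    · exact h0
    · nlinarith
  rw [hzim] at hre
  nlinarith [mul_nonneg (le_of_lt hs) (mul_nonneg hp hp), mul_nonneg (le_of_lt hc) hp]

end aux

/-- Hurwitz property of the modal matrix `A = [[0, I], [−K, −C]]` for symmetric positive
definite `C, K`. -/
theorem stmt_6 {n : ℕ} (hn : 0 < n) (C K : Matrix (Fin n) (Fin n) ℝ)
    (hCs : C.IsSymm) (hCpd : C.PosDef) (hKs : K.IsSymm) (hKpd : K.PosDef) :
    IsHurwitz (Matrix.fromBlocks (0 : Matrix (Fin n) (Fin n) ℝ) (1 : Matrix (Fin n) (Fin n) ℝ)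
      (-K) (-C)) := by
  intro z hz
  set A := Matrix.fromBlocks (0 : Matrix (Fin n) (Fin n) ℝ) (1 : Matrix (Fin n) (Fin n) ℝ)
      (-K) (-C) with hA
  set A' := A.map Complex.ofReal with hA'
  set K' := K.map Complex.ofReal with hK'
  set C' := C.map Complex.ofReal with hC'
  -- turn root of charpoly into eigenvector
  have hdet : (Matrix.scalar (Fin n ⊕ Fin n) z - A').det = 0 := by
    have h1 : Polynomial.eval z A'.charpoly = 0 := hz
    rwa [Matrix.charpoly, eval_det, Matrix.matPolyEquiv_charmatrix,
      Polynomial.eval_sub, Polynomial.eval_X, Polynomial.eval_C] at h1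
  obtain ⟨v, hv0, hv⟩ := Matrix.exists_mulVec_eq_zero_iff.mpr hdet
  have heig : A' *ᵥ v = z • v := by
    rw [Matrix.sub_mulVec, sub_eq_zero] at hv
    rw [← hv, Matrix.scalar_apply]
    funext i
    simp [Matrix.mulVec_diagonal]
  -- decompose the eigenvector
  have hA'blocks : A' = Matrix.fromBlocks (0 : Matrix (Fin n) (Fin n) ℂ)
      (1 : Matrix (Fin n) (Fin n) ℂ) (-K') (-C') := by
    ext i j
    cases i <;> cases j <;>
      simp [hA', hA, hK', hC', Matrix.one_apply, apply_ite Complex.ofReal, Matrix.map_apply]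
  set x : Fin n → ℂ := v ∘ Sum.inl with hx
  set y : Fin n → ℂ := v ∘ Sum.inr with hy
  rw [hA'blocks, Matrix.fromBlocks_mulVec] at heig
  have hyx : y = z • x := by
    funext i
    have := congrFun heig (Sum.inl i)
    simpa [hx, hy] using this
  have hinr : (-K') *ᵥ x + (-C') *ᵥ y = z • y := by
    funext i
    have := congrFun heig (Sum.inr i)
    simpa [hx, hy] using this
  have hxne : x ≠ 0 := by
    intro h0
    apply hv0
    funext i
    cases i with
    | inl i => exact congrFun h0 i
    | inr i =>
      have : y i = 0 := by rw [hyx, h0]; simp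
      exact this
  -- the quadratic equation
  have hquad : z • (z • x) + z • (C' *ᵥ x) + K' *ᵥ x = 0 := by
    rw [hyx] at hinr
    rw [Matrix.neg_mulVec, Matrix.neg_mulVec, Matrix.mulVec_smul] at hinr
    have : z • (z • x) = -(K' *ᵥ x) + -(z • (C' *ᵥ x)) := by
      rw [← hinr]
    rw [this]
    abel
  -- take the quadratic form with star x
  obtain ⟨k, hkpos, hkeq⟩ := pd_quad_form K hKs hKpd x hxne
  obtain ⟨c, hcpos, hceq⟩ := pd_quad_form C hCs hCpd x hxne
  have hspos : (0 : ℂ) < star x ⬝ᵥ x := Matrix.dotProduct_star_self_pos_iff.mpr hxne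
  set s : ℝ := (star x ⬝ᵥ x).re with hsdef
  have hseq : star x ⬝ᵥ x = (s : ℂ) := by
    have him : (star x ⬝ᵥ x).im = 0 := by
      have := hspos.le
      rw [Complex.le_def] at this
      simpa using this.2.symm
    exact Complex.ext rfl (by simp [him])
  have hspos' : 0 < s := by
    rw [Complex.lt_def] at hspos
    simpa using hspos.1
  have hzero : (s : ℂ) * z ^ 2 + (c : ℂ) * z + (k : ℂ) = 0 := by
    have := congrArg (fun w => star x ⬝ᵥ w) hquad
    simp only [dotProduct_add, dotProduct_smul, dotProduct_zero, smul_eq_mul] at this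
    rw [hkeq, hseq] at this
    have hceq' : star x ⬝ᵥ C' *ᵥ x = (c : ℂ) := hceq
    rw [hceq'] at this
    rw [← this]
    ring
  exact quad_root_re_neg hspos' hcpos hkpos hzero
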